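/- The family U = ⋃ₙ Uₙ, where Uₙ = {((j−1)/2ⁿ, (j+1)/2ⁿ) : −3ⁿ < j < 3ⁿ}, is an open cover of ℝ which is weakly ω-groupable with respect to the ideal of finite sets but is not an ω-cover: no single member of U contains the two-point set {−1, 1}, yet the interval (−(3/2)ⁿ, (3/2)ⁿ) is contained in ⋃Uₙ for every n. -/

import Mathlib

open Set

/-- The family `Uₙ = {((j−1)/2ⁿ, (j+1)/2ⁿ) : −3ⁿ < j < 3ⁿ}` of open intervals. -/
def Ulevel (n : ℕ) : Set (Set ℝ) :=
  {S | ∃ j : ℤ, -(3 : ℤ) ^ n < j ∧ j < 3 ^ n ∧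
    S = Set.Ioo (((j : ℝ) - 1) / 2 ^ n) (((j : ℝ) + 1) / 2 ^ n)}

/-- The family `U = ⋃ₙ Uₙ`. -/
def Ufam : Set (Set ℝ) := ⋃ n : ℕ, Ulevel n

lemma Ulevel_finite (n : ℕ) : (Ulevel n).Finite := by
  have : Ulevel n ⊆ (fun j : ℤ => Set.Ioo (((j : ℝ) - 1) / 2 ^ n) (((j : ℝ) + 1) / 2 ^ n)) ''
      (Set.Ioo (-(3 : ℤ) ^ n) (3 ^ n)) := by
    rintro S ⟨j, h1, h2, rfl⟩
    exact ⟨j, ⟨h1, h2⟩, rfl⟩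
  exact Set.Finite.subset ((Set.finite_Ioo _ _).image _) this

lemma Ioo_sub_level (n : ℕ) :
    Set.Ioo (-((3 : ℝ) / 2) ^ n) (((3 : ℝ) / 2) ^ n) ⊆ ⋃₀ Ulevel n := by
  rintro x ⟨hx1, hx2⟩
  have h2 : (0 : ℝ) < 2 ^ n := by positivity
  set t : ℝ := x * 2 ^ n with ht
  have h3 : ((3 : ℝ)/2) ^ n * 2 ^ n = 3 ^ n := by
    rw [← mul_pow]; norm_num
  have htlt : t < 3 ^ n := by
    rw [← h3]; exact (mul_lt_mul_iff_of_pos_right h2).2 hx2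
  have htgt : -(3 : ℝ) ^ n < t := by
    rw [← h3]
    have := (mul_lt_mul_iff_of_pos_right h2).2 hx1
    simpa [neg_mul] using this
  set j : ℤ := if 0 ≤ t then ⌊t⌋ else ⌈t⌉ with hj
  have hjt : (j : ℝ) - 1 < t ∧ t < (j : ℝ) + 1 ∧ -(3:ℝ)^n < j ∧ (j : ℝ) < 3 ^ n := by
    by_cases h : 0 ≤ t
    · simp only [hj, if_pos h]
      have h3 : (0:ℝ) < 3 ^ n := by positivity
      have hf : (0:ℝ) ≤ (⌊t⌋ : ℝ) := by exact_mod_cast Int.floor_nonneg.2 h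
      refine ⟨by linarith [Int.floor_le t], by exact_mod_cast Int.lt_floor_add_one t,
        by linarith, lt_of_le_of_lt (Int.floor_le t) htlt⟩
    · simp only [hj, if_neg h]
      push_neg at h
      have h3 : (0:ℝ) < 3 ^ n := by positivity
      have hc : (⌈t⌉ : ℝ) ≤ 0 := by exact_mod_cast Int.ceil_le.2 (by exact_mod_cast h.le : t ≤ ((0:ℤ):ℝ))
      refine ⟨by linarith [Int.ceil_lt_add_one t], by linarith [Int.le_ceil t],
        lt_of_lt_of_le htgt (Int.le_ceil t), by linarith⟩
  obtain ⟨hl, hr, hb1, hb2⟩ := hjt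
  have hcast : ((3:ℤ)^n : ℝ) = (3:ℝ)^n := by push_cast; ring
  refine ⟨Set.Ioo (((j : ℝ) - 1) / 2 ^ n) (((j : ℝ) + 1) / 2 ^ n),
    ⟨j, ?_, ?_, rfl⟩, ?_, ?_⟩
  · exact_mod_cast (by push_cast; linarith : (((-(3:ℤ)^n : ℤ)) : ℝ) < (j : ℝ))
  · exact_mod_cast (by push_cast; linarith : ((j:ℤ) : ℝ) < (((3:ℤ)^n : ℤ) : ℝ))
  · rw [div_lt_iff₀ h2]; linarith
  · rw [lt_div_iff₀ h2]; linarith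

lemma Ulevel_eq_level (n m : ℕ) (S : Set ℝ) (hn : S ∈ Ulevel n) (hm : S ∈ Ulevel m) :
    n = m := by
  obtain ⟨j, _, _, rfl⟩ := hn
  obtain ⟨j', _, _, hEq⟩ := hm
  have h2n : (0 : ℝ) < 2 ^ n := by positivity
  have h2m : (0 : ℝ) < 2 ^ m := by positivity
  have hab : ((j : ℝ) - 1) / 2 ^ n < ((j : ℝ) + 1) / 2 ^ n := by
    apply div_lt_div_of_pos_right (by linarith) h2n
  have hcd : ((j' : ℝ) - 1) / 2 ^ m < ((j' : ℝ) + 1) / 2 ^ m := by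
    apply div_lt_div_of_pos_right (by linarith) h2m
  have hInf := csInf_Ioo hab
  have hSup := csSup_Ioo hab
  rw [hEq] at hInf hSup
  rw [csInf_Ioo hcd] at hInf
  rw [csSup_Ioo hcd] at hSup
  have hdiff : (2 : ℝ) / 2 ^ m = 2 / 2 ^ n := by
    have h := congrArg₂ (fun a b : ℝ => a - b) hSup hInf
    simp only [div_sub_div_same] at h
    norm_num at h
    convert h using 2
  have h2eq : (2 : ℝ) ^ n = 2 ^ m := by
    rw [div_eq_div_iff h2m.ne' h2n.ne'] at hdiff
    linarith
  have : ((2 ^ n : ℕ) : ℝ) = ((2 ^ m : ℕ) : ℝ) := by push_cast; exact h2eq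
  exact Nat.pow_right_injective (le_refl 2) (Nat.cast_injective this)

theorem Ufam_weakly_groupable_not_omega_cover :
    -- `U` is an open cover of `ℝ` with `ℝ ∉ U`
    (∀ S ∈ Ufam, IsOpen S) ∧ ⋃₀ Ufam = Set.univ ∧ Set.univ ∉ Ufam ∧
    -- no single member of `U` contains `{-1, 1}`
    (¬ ∃ S ∈ Ufam, ({-1, 1} : Set ℝ) ⊆ S) ∧
    -- hence `U` is not an ω-cover
    (¬ ∀ F : Set ℝ, F.Finite → ∃ S ∈ Ufam, F ⊆ S) ∧
    -- `(-(3/2)ⁿ, (3/2)ⁿ) ⊆ ⋃ Uₙ` for every `n`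
    (∀ n : ℕ, Set.Ioo (-((3 : ℝ) / 2) ^ n) (((3 : ℝ) / 2) ^ n) ⊆ ⋃₀ Ulevel n) ∧
    -- `U` is weakly ω-groupable with respect to the ideal of finite sets
    (∃ φ : {S // S ∈ Ufam} → ℕ,
      (∀ k, {S : {S // S ∈ Ufam} | φ S = k}.Finite) ∧
      ∀ F : Set ℝ, F.Finite → ∃ k, F ⊆ ⋃₀ (Subtype.val '' {S | φ S = k})) := by
  classical
  have hlev : ∀ n, Ulevel n ⊆ Ufam := fun n S h => Set.mem_iUnion.2 ⟨n, h⟩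
  have hone : (1 : ℝ) < 3 / 2 := by norm_num
  have h4 : ¬ ∃ S ∈ Ufam, ({-1, 1} : Set ℝ) ⊆ S := by
    rintro ⟨S, hS, hsub⟩
    obtain ⟨n, j, _, _, rfl⟩ := Set.mem_iUnion.1 hS
    have h2n : (0 : ℝ) < 2 ^ n := by positivity
    have h1n : (1 : ℝ) ≤ 2 ^ n := one_le_pow₀ (by norm_num)
    have hm1 := hsub (show (-1 : ℝ) ∈ ({-1, 1} : Set ℝ) by norm_num)
    have hp1 := hsub (show (1 : ℝ) ∈ ({-1, 1} : Set ℝ) by norm_num)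
    have e1 : ((j : ℝ) - 1) < -1 * 2 ^ n := (div_lt_iff₀ h2n).1 hm1.1
    have e2 : (1 : ℝ) * 2 ^ n < (j : ℝ) + 1 := (lt_div_iff₀ h2n).1 hp1.2
    linarith
  refine ⟨?_, ?_, ?_, h4, ?_, Ioo_sub_level, ?_⟩
  · rintro S hS
    obtain ⟨n, j, _, _, rfl⟩ := Set.mem_iUnion.1 hS
    exact isOpen_Ioo
  · ext x
    simp only [Set.mem_univ, iff_true]
    obtain ⟨n, hn⟩ := pow_unbounded_of_one_lt |x| hone
    have hx : x ∈ Set.Ioo (-((3 : ℝ) / 2) ^ n) (((3 : ℝ) / 2) ^ n) := by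
      constructor
      · have := neg_abs_le x; linarith
      · have := le_abs_self x; linarith
    obtain ⟨S, hS, hxS⟩ := Ioo_sub_level n hx
    exact ⟨S, hlev n hS, hxS⟩
  · intro h
    obtain ⟨n, j, _, _, hEq⟩ := Set.mem_iUnion.1 h
    have : ((j : ℝ) + 1) / 2 ^ n ∈ Set.Ioo (((j : ℝ) - 1) / 2 ^ n) (((j : ℝ) + 1) / 2 ^ n) :=
      hEq ▸ Set.mem_univ _
    exact lt_irrefl _ this.2
  · intro h
    obtain ⟨S, hS, hsub⟩ := h ({-1, 1} : Set ℝ) (Set.toFinite _)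
    exact h4 ⟨S, hS, hsub⟩
  · refine ⟨fun S => Nat.find (Set.mem_iUnion.1 S.2), ?_, ?_⟩
    · intro k
      have hsub : {S : {S // S ∈ Ufam} | Nat.find (Set.mem_iUnion.1 S.2) = k} ⊆
          Subtype.val ⁻¹' Ulevel k := by
        intro S hS
        have := Nat.find_spec (Set.mem_iUnion.1 S.2)
        rw [hS] at this
        exact this
      exact Set.Finite.subset ((Ulevel_finite k).preimage (Subtype.val_injective.injOn))
        hsub
    · intro F hF
      obtain ⟨a, ha⟩ := hF.bddAbove
      obtain ⟨b, hb⟩ := hF.bddBelow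
      obtain ⟨k, hk⟩ := pow_unbounded_of_one_lt (|a| + |b| + 1) hone
      refine ⟨k, fun x hx => ?_⟩
      have hxI : x ∈ Set.Ioo (-((3 : ℝ) / 2) ^ k) (((3 : ℝ) / 2) ^ k) := by
        have h1 := ha hx
        have h2 := hb hx
        have := le_abs_self a
        have := neg_abs_le b
        constructor <;> nlinarith [abs_nonneg a, abs_nonneg b]
      obtain ⟨S, hS, hxS⟩ := Ioo_sub_level k hxI
      have hU : S ∈ Ufam := hlev k hS
      refine ⟨S, ⟨⟨S, hU⟩, ?_, rfl⟩, hxS⟩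
      exact Ulevel_eq_level _ _ _ (Nat.find_spec (Set.mem_iUnion.1 hU)) hS
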